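/- Let g be a finite-dimensional real Lie algebra and a : g → g a Lie algebra automorphism. Let g^s be the sum of the generalized eigenspaces of a corresponding to eigenvalues of modulus less than 1, and g^u the sum of those corresponding to eigenvalues of modulus greater than 1. Then the smallest Lie subalgebra h of g containing g^s and g^u is an ideal of g. -/

import Mathlib

open TensorProduct Module



private lemma lie_mem_maxGenEigenspace_aux {K L : Type*} [Field K] [LieRing L] [LieAlgebra K L]
    {f : Module.End K L} (hf : ∀ x y : L, f ⁅x, y⁆ = ⁅f x, f y⁆) {l m : K} :
    ∀ N p q : ℕ, p + q ≤ N → ∀ x y : L, ((f - l • 1) ^ p) x = 0 → ((f - m • 1) ^ q) y = 0 →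
      ⁅x, y⁆ ∈ f.maxGenEigenspace (l * m) := by
  intro N
  induction N with
  | zero =>
    intro p q hpq x y hx hy
    obtain ⟨rfl, rfl⟩ : p = 0 ∧ q = 0 := by omega
    simp only [pow_zero, Module.End.one_apply] at hx
    rw [hx, zero_lie]
    exact Submodule.zero_mem _
  | succ N ih =>
    intro p q hpq x y hx hy
    match p, q with
    | 0, q =>
      simp only [pow_zero, Module.End.one_apply] at hx
      rw [hx, zero_lie]; exact Submodule.zero_mem _
    | p, 0 =>
      simp only [pow_zero, Module.End.one_apply] at hy
      rw [hy, lie_zero]; exact Submodule.zero_mem _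
    | p + 1, q + 1 =>
      have hcomm : Commute ((f - m • 1) ^ (q + 1)) f :=
        (((Commute.refl f).sub_left (((Commute.one_left f)).smul_left m))).pow_left _
      have h1 : ⁅(f - l • 1) x, f y⁆ ∈ f.maxGenEigenspace (l * m) := by
        refine ih p (q + 1) (by omega) _ _ ?_ ?_
        · rw [← Module.End.mul_apply, ← pow_succ, hx]
        · rw [← Module.End.mul_apply, hcomm.eq, Module.End.mul_apply, hy, map_zero]
      have h2 : ⁅x, (f - m • 1) y⁆ ∈ f.maxGenEigenspace (l * m) := by
        refine ih (p + 1) q (by omega) _ _ hx ?_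
        rw [← Module.End.mul_apply, ← pow_succ, hy]
      have key : (f - (l * m) • 1) ⁅x, y⁆ = ⁅(f - l • 1) x, f y⁆ + l • ⁅x, (f - m • 1) y⁆ := by
        simp only [LinearMap.sub_apply, LinearMap.smul_apply, Module.End.one_apply, hf,
          sub_lie, lie_sub, smul_sub, lie_smul, smul_lie, smul_smul]
        abel
      have hmem : (f - (l * m) • 1) ⁅x, y⁆ ∈ f.maxGenEigenspace (l * m) := by
        rw [key]; exact Submodule.add_mem _ h1 (Submodule.smul_mem _ _ h2)
      obtain ⟨k, hk⟩ := (Module.End.mem_maxGenEigenspace _ _ _).mp hmem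
      exact (Module.End.mem_maxGenEigenspace _ _ _).mpr
        ⟨k + 1, by rw [pow_succ, Module.End.mul_apply, hk]⟩

private lemma lie_mem_maxGenEigenspace {K L : Type*} [Field K] [LieRing L] [LieAlgebra K L]
    {f : Module.End K L} (hf : ∀ x y : L, f ⁅x, y⁆ = ⁅f x, f y⁆) {l m : K} {x y : L}
    (hx : x ∈ f.maxGenEigenspace l) (hy : y ∈ f.maxGenEigenspace m) :
    ⁅x, y⁆ ∈ f.maxGenEigenspace (l * m) := by
  obtain ⟨p, hp⟩ := (Module.End.mem_maxGenEigenspace _ _ _).mp hx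
  obtain ⟨q, hq⟩ := (Module.End.mem_maxGenEigenspace _ _ _).mp hy
  exact lie_mem_maxGenEigenspace_aux hf (p + q) p q le_rfl x y hp hq

private lemma lie_mem_biSup {K L : Type*} [Field K] [LieRing L] [LieAlgebra K L]
    {f : Module.End K L} (hf : ∀ x y : L, f ⁅x, y⁆ = ⁅f x, f y⁆) {S T U : Set K}
    (hSTU : ∀ l ∈ S, ∀ m ∈ T, l * m ∈ U) {x y : L}
    (hx : x ∈ ⨆ l ∈ S, f.maxGenEigenspace l) (hy : y ∈ ⨆ m ∈ T, f.maxGenEigenspace m) :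
    ⁅x, y⁆ ∈ ⨆ n ∈ U, f.maxGenEigenspace n := by
  rw [iSup_subtype'] at hx hy
  induction hx using Submodule.iSup_induction' with
  | mem l x hxl =>
    induction hy using Submodule.iSup_induction' with
    | mem m y hym =>
      exact le_biSup (f.maxGenEigenspace ·) (hSTU l l.2 m m.2) (lie_mem_maxGenEigenspace hf hxl hym)
    | zero => rw [lie_zero]; exact Submodule.zero_mem _
    | add y z _ _ hy hz => rw [lie_add]; exact Submodule.add_mem _ hy hz
  | zero => rw [zero_lie]; exact Submodule.zero_mem _
  | add x z _ _ hx hz => rw [add_lie]; exact Submodule.add_mem _ hx hz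


section Conj

variable {g : Type*} [AddCommGroup g] [Module ℝ g]

/-- Real/imaginary part map `ℂ ⊗[ℝ] g → g × g`. -/
noncomputable def reimAux (g : Type*) [AddCommGroup g] [Module ℝ g] :
    (ℂ ⊗[ℝ] g) →ₗ[ℝ] g × g :=
  TensorProduct.lift
    { toFun := fun c => LinearMap.prod (c.re • LinearMap.id) (c.im • LinearMap.id)
      map_add' := by
        intro c d
        ext v <;> simp [add_smul]
      map_smul' := by
        intro r c
        ext v <;> simp [Complex.smul_re, Complex.smul_im, mul_smul] }

@[simp] lemma reimAux_tmul (c : ℂ) (v : g) :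
    reimAux g (c ⊗ₜ[ℝ] v) = (c.re • v, c.im • v) := rfl

lemma eq_tmul_add_tmul (e : ℂ ⊗[ℝ] g) :
    e = (1 : ℂ) ⊗ₜ[ℝ] (reimAux g e).1 + Complex.I ⊗ₜ[ℝ] (reimAux g e).2 := by
  induction e with
  | zero => simp
  | tmul c v =>
    rw [reimAux_tmul]
    rw [← smul_tmul, ← smul_tmul]
    rw [← add_tmul]
    congr 1
    simp [Complex.real_smul]
  | add x y hx hy =>
    rw [map_add]
    conv_lhs => rw [hx, hy]
    simp only [Prod.fst_add, Prod.snd_add, tmul_add]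
    abel

lemma one_tmul_injective {v w : g} (h : (1 : ℂ) ⊗ₜ[ℝ] v = (1 : ℂ) ⊗ₜ[ℝ] w) : v = w := by
  have := congrArg (fun e => (reimAux g e).1) h
  simpa using this

/-- Conjugation on `ℂ ⊗[ℝ] g`. -/
noncomputable def conjT (g : Type*) [AddCommGroup g] [Module ℝ g] :
    (ℂ ⊗[ℝ] g) →ₗ[ℝ] (ℂ ⊗[ℝ] g) :=
  LinearMap.rTensor g (Complex.conjAe.toLinearMap)

@[simp] lemma conjT_tmul (c : ℂ) (v : g) :
    conjT g (c ⊗ₜ[ℝ] v) = (starRingEnd ℂ c) ⊗ₜ[ℝ] v := rfl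

@[simp] lemma conjT_conjT (e : ℂ ⊗[ℝ] g) : conjT g (conjT g e) = e := by
  induction e with
  | zero => simp
  | tmul c v => simp
  | add x y hx hy => rw [map_add, map_add, hx, hy]

lemma conjT_smul (c : ℂ) (e : ℂ ⊗[ℝ] g) :
    conjT g (c • e) = (starRingEnd ℂ c) • conjT g e := by
  induction e with
  | zero => simp
  | tmul d v => rw [smul_tmul', conjT_tmul, conjT_tmul, smul_tmul']; simp [smul_eq_mul]
  | add x y hx hy => rw [smul_add, map_add, hx, hy, map_add, smul_add]

lemma conjT_fixed {e : ℂ ⊗[ℝ] g} (h : conjT g e = e) : ∃ v : g, e = (1 : ℂ) ⊗ₜ[ℝ] v := by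
  set p := reimAux g e with hp
  refine ⟨p.1, ?_⟩
  have he := eq_tmul_add_tmul e
  have hσ : conjT g e = (1 : ℂ) ⊗ₜ[ℝ] p.1 - Complex.I ⊗ₜ[ℝ] p.2 := by
    conv_lhs => rw [he]
    rw [map_add, conjT_tmul, conjT_tmul]
    simp [Complex.conj_I, neg_tmul, sub_eq_add_neg]
    rfl
  have h2 : Complex.I ⊗ₜ[ℝ] p.2 + Complex.I ⊗ₜ[ℝ] p.2 = 0 := by
    have := h.symm.trans hσ
    conv_lhs at this => rw [he]
    linear_combination (norm := abel) this
  have h3 : p.2 + p.2 = 0 := by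
    have := congrArg (fun e => (reimAux g e).2) h2
    simpa using this
  have h4 : p.2 = 0 := by
    have : (2 : ℝ) • p.2 = 0 := by rw [two_smul]; exact h3
    simpa using this
  rw [he, h4, tmul_zero, add_zero]

end Conj


private lemma brkt_eq {g : Type*} [LieRing g] [LieAlgebra ℝ g] (x y : ℂ ⊗[ℝ] g) :
    ⁅x, y⁆ = @Bracket.bracket _ _ (@LieRingModule.toBracket _ _ _ _ lieRingSelfModule) x y := rfl

/-- Let `g` be a finite-dimensional real Lie algebra and `a` an automorphism. With `gˢ`
(resp. `gᵘ`) the set of vectors lying (after complexification) in the sum of generalized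
eigenspaces for eigenvalues of modulus `< 1` (resp. `> 1`), the smallest Lie subalgebra `h`
containing `gˢ ∪ gᵘ` is an ideal of `g`. -/
theorem hyperbolic_subalgebra_is_ideal
    {g : Type*} [LieRing g] [LieAlgebra ℝ g] [FiniteDimensional ℝ g]
    (a : g ≃ₗ⁅ℝ⁆ g) :
    ∀ A : Module.End ℂ (ℂ ⊗[ℝ] g),
      A = LinearMap.baseChange ℂ (a.toLinearEquiv : g →ₗ[ℝ] g) →
    ∀ gs gu : Set g,
      gs = {v : g | (1 : ℂ) ⊗ₜ[ℝ] v ∈ ⨆ μ ∈ {μ : ℂ | ‖μ‖ < 1}, A.maxGenEigenspace μ} →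
      gu = {v : g | (1 : ℂ) ⊗ₜ[ℝ] v ∈ ⨆ μ ∈ {μ : ℂ | 1 < ‖μ‖}, A.maxGenEigenspace μ} →
    ∀ h : LieSubalgebra ℝ g, h = LieSubalgebra.lieSpan ℝ g (gs ∪ gu) →
    ∀ x : g, ∀ y ∈ h, ⁅x, y⁆ ∈ h := by
  intro A hA gs gu hgs hgu h hh x y hy
  set σ := conjT g with hσdef
  set Es := ⨆ μ ∈ {μ : ℂ | ‖μ‖ < 1}, A.maxGenEigenspace μ with hEs
  set Ec := ⨆ μ ∈ {μ : ℂ | ‖μ‖ = 1}, A.maxGenEigenspace μ with hEc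
  set Eu := ⨆ μ ∈ {μ : ℂ | 1 < ‖μ‖}, A.maxGenEigenspace μ with hEu
  -- basic facts about `A`
  have hAt : ∀ (c : ℂ) (v : g), A (c ⊗ₜ[ℝ] v) = c ⊗ₜ[ℝ] (a v) := by
    intro c v; rw [hA]; simp
  have hkey : ∀ (c d : ℂ) (v w : g),
      A ⁅c ⊗ₜ[ℝ] v, d ⊗ₜ[ℝ] w⁆ = ⁅A (c ⊗ₜ[ℝ] v), A (d ⊗ₜ[ℝ] w)⁆ := by
    intro c d v w
    rw [LieAlgebra.ExtendScalars.bracket_tmul, hAt, hAt, hAt,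
      LieAlgebra.ExtendScalars.bracket_tmul]
    congr 1
    exact LieHom.map_lie a.toLieHom v w
  have hAlie : ∀ e f : ℂ ⊗[ℝ] g,
      A (@Bracket.bracket _ _ (@LieRingModule.toBracket _ _ _ _ lieRingSelfModule) e f)
      = @Bracket.bracket _ _ (@LieRingModule.toBracket _ _ _ _ lieRingSelfModule)
          (A e) (A f) := by
    intro e f
    rw [← brkt_eq, ← brkt_eq]
    induction e with
    | zero => rw [brkt_eq, brkt_eq, zero_lie, map_zero, zero_lie]
    | tmul c v =>
      induction f with
      | zero => rw [brkt_eq, brkt_eq, lie_zero, map_zero, lie_zero]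
      | tmul d w => exact hkey c d v w
      | add e₁ e₂ h₁ h₂ =>
        simp only [brkt_eq] at h₁ h₂ ⊢
        rw [lie_add, map_add, h₁, h₂, map_add, lie_add]
    | add e₁ e₂ h₁ h₂ =>
      simp only [brkt_eq] at h₁ h₂ ⊢
      rw [add_lie, map_add, h₁, h₂, map_add, add_lie]
  have hAσ : ∀ e, σ (A e) = A (σ e) := by
    intro e
    induction e with
    | zero => simp
    | tmul c v => rw [hAt, hσdef, conjT_tmul, conjT_tmul, hAt]
    | add e₁ e₂ h₁ h₂ => rw [map_add, map_add, h₁, h₂, map_add, map_add]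
  -- conjugation maps generalized eigenspaces to conjugate ones
  have hstep : ∀ (μ : ℂ) (e), (A - (starRingEnd ℂ μ) • 1) (σ e) = σ ((A - μ • 1) e) := by
    intro μ e
    rw [LinearMap.sub_apply, LinearMap.sub_apply, map_sub, hAσ]
    congr 1
    rw [LinearMap.smul_apply, LinearMap.smul_apply, Module.End.one_apply, Module.End.one_apply,
      hσdef, conjT_smul]
  have hpow : ∀ (μ : ℂ) (k : ℕ) (e), ((A - (starRingEnd ℂ μ) • 1) ^ k) (σ e)
      = σ (((A - μ • 1) ^ k) e) := by
    intro μ k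
    induction k with
    | zero => intro e; simp
    | succ k ih =>
      intro e
      rw [pow_succ, Module.End.mul_apply, hstep, ih, ← Module.End.mul_apply, ← pow_succ]
  have hconjE : ∀ (μ : ℂ) (e), e ∈ A.maxGenEigenspace μ →
      σ e ∈ A.maxGenEigenspace (starRingEnd ℂ μ) := by
    intro μ e he
    obtain ⟨k, hk⟩ := (Module.End.mem_maxGenEigenspace _ _ _).mp he
    exact (Module.End.mem_maxGenEigenspace _ _ _).mpr ⟨k, by rw [hpow, hk, map_zero]⟩
  have hconjSup : ∀ (S : Set ℂ), (∀ μ ∈ S, starRingEnd ℂ μ ∈ S) →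
      ∀ e ∈ ⨆ μ ∈ S, A.maxGenEigenspace μ, σ e ∈ ⨆ μ ∈ S, A.maxGenEigenspace μ := by
    intro S hS e he
    rw [iSup_subtype'] at he
    induction he using Submodule.iSup_induction' with
    | mem μ e hμ =>
      exact le_biSup (A.maxGenEigenspace ·) (hS μ μ.2) (hconjE _ _ hμ)
    | zero => simp
    | add e₁ e₂ _ _ h₁ h₂ => rw [map_add]; exact Submodule.add_mem _ h₁ h₂
  have hσEs : ∀ e ∈ Es, σ e ∈ Es := by
    rw [hEs]
    refine hconjSup _ fun μ hμ => ?_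
    simpa using hμ
  have hσEc : ∀ e ∈ Ec, σ e ∈ Ec := by
    rw [hEc]
    refine hconjSup _ fun μ hμ => ?_
    simpa using hμ
  have hσEu : ∀ e ∈ Eu, σ e ∈ Eu := by
    rw [hEu]
    refine hconjSup _ fun μ hμ => ?_
    simpa using hμ
  -- the three spaces fill out everything
  have htop : Es ⊔ (Ec ⊔ Eu) = ⊤ := by
    refine le_antisymm le_top ?_
    rw [← Module.End.iSup_maxGenEigenspace_eq_top A, hEs, hEc, hEu]
    refine iSup_le fun μ => ?_
    rcases lt_trichotomy ‖μ‖ 1 with h1 | h1 | h1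
    · exact le_sup_of_le_left (le_biSup (A.maxGenEigenspace ·) h1)
    · exact le_sup_of_le_right (le_sup_of_le_left (le_biSup (A.maxGenEigenspace ·) h1))
    · exact le_sup_of_le_right (le_sup_of_le_right (le_biSup (A.maxGenEigenspace ·) h1))
  -- decompose `x`
  have hxtop : (1 : ℂ) ⊗ₜ[ℝ] x ∈ Es ⊔ (Ec ⊔ Eu) := htop ▸ Submodule.mem_top
  obtain ⟨s, hs, w, hw, hsw⟩ := Submodule.mem_sup.mp hxtop
  obtain ⟨c, hc, u, hu, hcu⟩ := Submodule.mem_sup.mp hw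
  have hsum0 : s + c + u = (1 : ℂ) ⊗ₜ[ℝ] x := by rw [add_assoc, hcu, hsw]
  set s' := (2⁻¹ : ℝ) • (s + σ s) with hs'def
  set c' := (2⁻¹ : ℝ) • (c + σ c) with hc'def
  set u' := (2⁻¹ : ℝ) • (u + σ u) with hu'def
  have hs' : s' ∈ Es := Submodule.smul_of_tower_mem _ _ (Submodule.add_mem _ hs (hσEs _ hs))
  have hc' : c' ∈ Ec := Submodule.smul_of_tower_mem _ _ (Submodule.add_mem _ hc (hσEc _ hc))
  have hu' : u' ∈ Eu := Submodule.smul_of_tower_mem _ _ (Submodule.add_mem _ hu (hσEu _ hu))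
  have hσfix : ∀ e : ℂ ⊗[ℝ] g, σ ((2⁻¹ : ℝ) • (e + σ e)) = (2⁻¹ : ℝ) • (e + σ e) := by
    intro e
    rw [map_smul, map_add, hσdef, conjT_conjT, add_comm]
  obtain ⟨xs, hxs⟩ := conjT_fixed (hσfix s)
  obtain ⟨xc, hxc⟩ := conjT_fixed (hσfix c)
  obtain ⟨xu, hxu⟩ := conjT_fixed (hσfix u)
  rw [← hs'def] at hxs
  rw [← hc'def] at hxc
  rw [← hu'def] at hxu
  have hσx : σ ((1 : ℂ) ⊗ₜ[ℝ] x) = (1 : ℂ) ⊗ₜ[ℝ] x := by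
    rw [hσdef, conjT_tmul, map_one]
  have hsum : s' + c' + u' = (1 : ℂ) ⊗ₜ[ℝ] x := by
    have h1 : s' + c' + u' = (2⁻¹ : ℝ) • ((s + c + u) + σ (s + c + u)) := by
      rw [hs'def, hc'def, hu'def, map_add, map_add]
      rw [← smul_add, ← smul_add]
      congr 1
      abel
    rw [h1, hsum0, hσx, ← two_smul ℝ ((1 : ℂ) ⊗ₜ[ℝ] x), smul_smul]
    norm_num
  have hxdecomp : x = xs + xc + xu := by
    apply one_tmul_injective (g := g)
    rw [tmul_add, tmul_add, ← hxs, ← hxc, ← hxu, hsum]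
  -- membership in h for gs, gu elements
  have hgsh : ∀ v ∈ gs, v ∈ h := fun v hv => by
    rw [hh]; exact LieSubalgebra.subset_lieSpan (Set.mem_union_left _ hv)
  have hguh : ∀ v ∈ gu, v ∈ h := fun v hv => by
    rw [hh]; exact LieSubalgebra.subset_lieSpan (Set.mem_union_right _ hv)
  have hxsgs : xs ∈ gs := by rw [hgs]; rw [Set.mem_setOf_eq, ← hxs]; exact hs'
  have hxugu : xu ∈ gu := by rw [hgu]; rw [Set.mem_setOf_eq, ← hxu]; exact hu'
  have hxsh : xs ∈ h := hgsh xs hxsgs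
  have hxuh : xu ∈ h := hguh xu hxugu
  -- brackets with xc preserve gs and gu
  have hbr : ∀ v w : g, (1 : ℂ) ⊗ₜ[ℝ] ⁅v, w⁆
      = @Bracket.bracket _ _ (@LieRingModule.toBracket _ _ _ _ lieRingSelfModule)
          ((1 : ℂ) ⊗ₜ[ℝ] v) ((1 : ℂ) ⊗ₜ[ℝ] w) := by
    intro v w
    rw [← brkt_eq, LieAlgebra.ExtendScalars.bracket_tmul, one_mul]
  have hxcEc : (1 : ℂ) ⊗ₜ[ℝ] xc ∈ ⨆ μ ∈ {μ : ℂ | ‖μ‖ = 1}, A.maxGenEigenspace μ := by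
    rw [← hEc, ← hxc]; exact hc'
  have hbrs : ∀ w ∈ gs, ⁅xc, w⁆ ∈ gs := by
    intro w hw
    rw [hgs] at hw ⊢
    rw [Set.mem_setOf_eq, hEs] at hw ⊢
    rw [hbr]
    refine lie_mem_biSup hAlie (S := {μ : ℂ | ‖μ‖ = 1}) (T := {μ : ℂ | ‖μ‖ < 1}) ?_ hxcEc hw
    intro l hl m hm
    rw [Set.mem_setOf_eq, norm_mul, Set.mem_setOf_eq.mp hl, one_mul]
    exact hm
  have hbru : ∀ w ∈ gu, ⁅xc, w⁆ ∈ gu := by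
    intro w hw
    rw [hgu] at hw ⊢
    rw [Set.mem_setOf_eq, hEu] at hw ⊢
    rw [hbr]
    refine lie_mem_biSup hAlie (S := {μ : ℂ | ‖μ‖ = 1}) (T := {μ : ℂ | 1 < ‖μ‖}) ?_ hxcEc hw
    intro l hl m hm
    rw [Set.mem_setOf_eq, norm_mul, Set.mem_setOf_eq.mp hl, one_mul]
    exact hm
  -- the subalgebra of elements whose bracket with xc stays in h
  let K : LieSubalgebra ℝ g :=
    { toSubmodule := h.toSubmodule ⊓ Submodule.comap (LieAlgebra.ad ℝ g xc) h.toSubmodule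
      lie_mem' := by
        intro p q hp hq
        obtain ⟨hp1, hp2⟩ := Submodule.mem_inf.mp hp
        obtain ⟨hq1, hq2⟩ := Submodule.mem_inf.mp hq
        have hp1' : p ∈ h := hp1
        have hq1' : q ∈ h := hq1
        have hp2' : ⁅xc, p⁆ ∈ h := hp2
        have hq2' : ⁅xc, q⁆ ∈ h := hq2
        refine Submodule.mem_inf.mpr ⟨h.lie_mem hp1' hq1', Submodule.mem_comap.mpr ?_⟩
        have : ⁅xc, ⁅p, q⁆⁆ ∈ h := by
          rw [leibniz_lie]
          exact h.add_mem (h.lie_mem hp2' hq1') (h.lie_mem hp1' hq2')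
        exact this }
  have hKmem : ∀ p : g, p ∈ K ↔ p ∈ h ∧ ⁅xc, p⁆ ∈ h := by
    intro p
    change p ∈ h.toSubmodule ⊓ Submodule.comap (LieAlgebra.ad ℝ g xc) h.toSubmodule ↔ _
    rw [Submodule.mem_inf, Submodule.mem_comap, LieAlgebra.ad_apply]
    exact Iff.rfl
  have hhK : h ≤ K := by
    conv_lhs => rw [hh]
    rw [LieSubalgebra.lieSpan_le]
    intro v hv
    rcases hv with hv | hv
    · exact (hKmem v).mpr ⟨hgsh v hv, hgsh _ (hbrs v hv)⟩
    · exact (hKmem v).mpr ⟨hguh v hv, hguh _ (hbru v hv)⟩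
  have hxch : ⁅xc, y⁆ ∈ h := ((hKmem y).mp (hhK hy)).2
  rw [hxdecomp, add_lie, add_lie]
  exact h.add_mem (h.add_mem (h.lie_mem hxsh hy) hxch) (h.lie_mem hxuh hy)
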